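/- Let G be a locally compact, second countable group with Haar measure μ and a proper left invariant metric d generating the topology such that μ(B_d(e,n)) ≤ β e^{αn} for all n. For each n define φⁿ(y) = max(0, 1 − d(e,y)/n) and bⁿ(g) = λ(g)φⁿ − φⁿ ∈ L^{2n}(G,μ). Then ‖bⁿ(g)‖_{2n}^{2n} ≤ (d(e,g)/n)^{2n} · 2β e^{αn}, and Σ_{n=1}^∞ ‖bⁿ(g)‖_{2n}² ≤ 4β e^{α} d(g,e)² (assuming β ≥ 1); hence b(g) = ⊕ₙ bⁿ(g) lies in the ℓ²-direct sum X = ⊕ₙ L^{2n}(G,μ) with ‖b(g)‖_X ≤ 2√β e^{α/2} d(g,e). -/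

import Mathlib

open MeasureTheory
open scoped ENNReal NNReal

lemma aux_sum_inv_sq_le (N : ℕ) : ∑ i ∈ Finset.range N, (1/((i:ℝ)+1))^2 ≤ 2 := by
  have key : ∀ i ∈ Finset.range N,
      (1/((i:ℝ)+1))^2 ≤ 2*((fun j : ℕ => 1/((j:ℝ)+1)) i - (fun j : ℕ => 1/((j:ℝ)+1)) (i+1)) := by
    intro i _
    simp only
    have h1 : (0:ℝ) < (i:ℝ)+1 := by positivity
    have h2 : (0:ℝ) < ((i:ℝ)+1)+1 := by positivity
    have hdiff : 1/((i:ℝ)+1) - 1/(((i+1:ℕ):ℝ)+1) = 1/(((i:ℝ)+1)*(((i:ℝ)+1)+1)) := by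
      push_cast
      field_simp
      ring
    rw [hdiff, mul_one_div, div_pow, one_pow, div_le_div_iff₀ (by positivity) (by positivity)]
    nlinarith
  calc ∑ i ∈ Finset.range N, (1/((i:ℝ)+1))^2
      ≤ ∑ i ∈ Finset.range N, 2*((fun j : ℕ => 1/((j:ℝ)+1)) i - (fun j : ℕ => 1/((j:ℝ)+1)) (i+1)) :=
        Finset.sum_le_sum key
    _ = 2 * ((fun j : ℕ => 1/((j:ℝ)+1)) 0 - (fun j : ℕ => 1/((j:ℝ)+1)) N) := by
        rw [← Finset.mul_sum, Finset.sum_range_sub' (fun j : ℕ => 1/((j:ℝ)+1)) N]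
    _ ≤ 2 := by
        simp only
        have : (0:ℝ) ≤ 1/((N:ℝ)+1) := by positivity
        norm_num
        linarith

lemma aux_tsum_ofReal_inv_sq_le : ∑' n : ℕ, ENNReal.ofReal ((1/((n:ℝ)+1))^2) ≤ 2 := by
  rw [ENNReal.tsum_eq_iSup_sum]
  apply iSup_le
  intro s
  obtain ⟨N, hN⟩ := s.exists_nat_subset_range
  calc ∑ i ∈ s, ENNReal.ofReal ((1/((i:ℝ)+1))^2)
      ≤ ∑ i ∈ Finset.range N, ENNReal.ofReal ((1/((i:ℝ)+1))^2) :=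
        Finset.sum_le_sum_of_subset hN
    _ = ENNReal.ofReal (∑ i ∈ Finset.range N, (1/((i:ℝ)+1))^2) :=
        (ENNReal.ofReal_sum_of_nonneg (fun i _ => by positivity)).symm
    _ ≤ ENNReal.ofReal 2 := ENNReal.ofReal_le_ofReal (aux_sum_inv_sq_le N)
    _ = 2 := ENNReal.ofReal_ofNat 2

theorem stmt17 {G : Type*} [Group G] [TopologicalSpace G] [IsTopologicalGroup G]
    [LocallyCompactSpace G] [SecondCountableTopology G]
    [MeasurableSpace G] [BorelSpace G]
    (μ : Measure G) [μ.IsHaarMeasure]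
    (d : G → G → ℝ)
    (h0 : ∀ x y : G, d x y = 0 ↔ x = y)
    (hsymm : ∀ x y : G, d x y = d y x)
    (htri : ∀ x y z : G, d x z ≤ d x y + d y z)
    (hinv : ∀ g x y : G, d (g * x) (g * y) = d x y)
    (hproper : ∀ r : ℝ, IsCompact {x : G | d x 1 ≤ r})
    (hgen : ∀ s : Set G, IsOpen s ↔ ∀ x ∈ s, ∃ ε > 0, {y : G | d y x < ε} ⊆ s)
    (α β : ℝ) (hα : 0 < α) (hβ : 1 ≤ β)
    (hgrowth : ∀ n : ℕ, μ {x : G | d x 1 < (n : ℝ)} ≤ ENNReal.ofReal (β * Real.exp (α * n)))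
    (φ : ℕ → G → ℝ) (hφ : ∀ (n : ℕ) (y : G), φ n y = max 0 (1 - d 1 y / n))
    (b : ℕ → G → G → ℝ) (hb : ∀ (n : ℕ) (g h : G), b n g h = φ n (g⁻¹ * h) - φ n h) :
    -- ‖bⁿ(g)‖_{2n}^{2n} ≤ (d(e,g)/n)^{2n} · 2β e^{αn}
    (∀ g : G, ∀ n : ℕ, 1 ≤ n →
      ∫⁻ h, (ENNReal.ofReal |b n g h|) ^ (2 * n) ∂μ ≤
        ENNReal.ofReal ((d 1 g / n) ^ (2 * n) * (2 * β * Real.exp (α * n)))) ∧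
    -- Σₙ ‖bⁿ(g)‖_{2n}² ≤ 4β e^α d(g,e)²
    (∀ g : G, ∑' n : ℕ, (eLpNorm (b (n + 1) g) ((2 * (n + 1) : ℕ)) μ) ^ 2 ≤
      ENNReal.ofReal (4 * β * Real.exp α * d 1 g ^ 2)) ∧
    -- hence b(g) ∈ X = ⊕ₙ L^{2n}(G,μ) with ‖b(g)‖_X ≤ 2√β e^{α/2} d(g,e)
    (∀ g : G, (∑' n : ℕ, (eLpNorm (b (n + 1) g) ((2 * (n + 1) : ℕ)) μ) ^ 2) ^ (1/2 : ℝ) ≤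
      ENNReal.ofReal (2 * Real.sqrt β * Real.exp (α / 2) * d 1 g)) := by
  -- basic facts about d
  have hd0 : ∀ x : G, d x x = 0 := fun x => (h0 x x).2 rfl
  have hdnn : ∀ x y : G, 0 ≤ d x y := by
    intro x y
    nlinarith [htri x y x, hd0 x, hsymm x y]
  have hdinv : ∀ g h : G, d g h = d 1 (g⁻¹ * h) := by
    intro g h
    rw [← hinv g⁻¹ g h, inv_mul_cancel]
  have hcont : ∀ x : G, Continuous (fun y => d x y) := by
    intro x
    rw [continuous_def]
    intro s hs
    rw [hgen]
    intro y hy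
    obtain ⟨ε, hε, hball⟩ := Metric.isOpen_iff.1 hs _ hy
    refine ⟨ε, hε, fun z hz => hball ?_⟩
    have hz' : d z y < ε := hz
    rw [Metric.mem_ball, Real.dist_eq, abs_sub_lt_iff]
    constructor <;> nlinarith [htri x z y, htri x y z, hsymm z y, hsymm y z]
  -- lipschitz bound on b
  have hblip : ∀ (n : ℕ) (g h : G), 0 < n → |b n g h| ≤ d 1 g / n := by
    intro n g h hn
    have hn' : (0:ℝ) < n := by exact_mod_cast hn
    rw [hb, hφ, hφ, ← hdinv]
    have h1 : |max (1 - d g h / n) 0 - max (1 - d 1 h / n) 0| ≤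
        |(1 - d g h / n) - (1 - d 1 h / n)| := abs_max_sub_max_le_abs _ _ _
    rw [max_comm (0:ℝ) _, max_comm (0:ℝ) _]
    refine le_trans h1 ?_
    have h2 : (1 - d g h / n) - (1 - d 1 h / n) = (d 1 h - d g h) / n := by ring
    rw [h2, abs_div, abs_of_pos hn', div_le_div_iff_of_pos_right hn']
    rw [abs_sub_le_iff]
    constructor <;> nlinarith [htri 1 g h, htri g 1 h, hsymm g 1]
  -- support of b
  have hsupp : ∀ (n : ℕ) (g h : G), 0 < n → (n:ℝ) ≤ d g h → (n:ℝ) ≤ d 1 h → b n g h = 0 := by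
    intro n g h hn hgh h1h
    have hn' : (0:ℝ) < n := by exact_mod_cast hn
    rw [hb, hφ, hφ, ← hdinv]
    have e1 : max 0 (1 - d g h / n) = 0 := by
      rw [max_eq_left]
      have : (1:ℝ) ≤ d g h / n := (one_le_div hn').2 hgh
      linarith
    have e2 : max 0 (1 - d 1 h / n) = 0 := by
      rw [max_eq_left]
      have : (1:ℝ) ≤ d 1 h / n := (one_le_div hn').2 h1h
      linarith
    rw [e1, e2, sub_zero]
  -- ball measure bound
  have hball : ∀ (g : G) (n : ℕ), μ {h | d g h < (n:ℝ)} ≤ ENNReal.ofReal (β * Real.exp (α * n)) := by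
    intro g n
    have hset : {h | d g h < (n:ℝ)} = (fun h => g⁻¹ * h) ⁻¹' {x | d x 1 < (n:ℝ)} := by
      ext h
      simp only [Set.mem_setOf_eq, Set.mem_preimage]
      rw [hsymm (g⁻¹ * h) 1, ← hdinv]
    rw [hset, measure_preimage_mul]
    exact hgrowth n
  -- part 1
  have key : ∀ g : G, ∀ n : ℕ, 1 ≤ n →
      ∫⁻ h, (ENNReal.ofReal |b n g h|) ^ (2 * n) ∂μ ≤
        ENNReal.ofReal ((d 1 g / n) ^ (2 * n) * (2 * β * Real.exp (α * n))) := by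
    intro g n hn
    have hn' : (0:ℝ) < n := by exact_mod_cast hn
    set S := {h | d g h < (n:ℝ)} ∪ {h | d 1 h < (n:ℝ)} with hS
    have hSm : MeasurableSet S :=
      ((measurableSet_lt (hcont g).measurable measurable_const)).union
        (measurableSet_lt (hcont 1).measurable measurable_const)
    have hpt : ∀ h, (ENNReal.ofReal |b n g h|) ^ (2 * n) ≤
        S.indicator (fun _ => (ENNReal.ofReal (d 1 g / n)) ^ (2 * n)) h := by
      intro h
      by_cases hh : h ∈ S
      · rw [Set.indicator_of_mem hh]
        exact pow_le_pow_left' (ENNReal.ofReal_le_ofReal (hblip n g h hn)) _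
      · rw [Set.indicator_of_notMem hh]
        simp only [hS, Set.mem_union, Set.mem_setOf_eq, not_or, not_lt] at hh
        rw [hsupp n g h hn hh.1 hh.2]
        simp only [abs_zero, ENNReal.ofReal_zero]
        rw [zero_pow (by omega)]
    calc ∫⁻ h, (ENNReal.ofReal |b n g h|) ^ (2 * n) ∂μ
        ≤ ∫⁻ h, S.indicator (fun _ => (ENNReal.ofReal (d 1 g / n)) ^ (2 * n)) h ∂μ :=
          lintegral_mono hpt
      _ = (ENNReal.ofReal (d 1 g / n)) ^ (2 * n) * μ S := lintegral_indicator_const hSm _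
      _ ≤ (ENNReal.ofReal (d 1 g / n)) ^ (2 * n) *
          (ENNReal.ofReal (β * Real.exp (α * n)) + ENNReal.ofReal (β * Real.exp (α * n))) := by
          refine mul_le_mul_right ?_ _
          exact le_trans (measure_union_le _ _) (add_le_add (hball g n) (hball 1 n))
      _ = ENNReal.ofReal ((d 1 g / n) ^ (2 * n) * (2 * β * Real.exp (α * n))) := by
          rw [← ENNReal.ofReal_add (p := β * Real.exp (α * n)) (q := β * Real.exp (α * n))
              (by positivity) (by positivity),
            ← ENNReal.ofReal_pow (p := d 1 g / n) (div_nonneg (hdnn 1 g) hn'.le),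
            ← ENNReal.ofReal_mul (pow_nonneg (div_nonneg (hdnn 1 g) hn'.le) _)]
          congr 1
          ring
  -- part 2
  have part2 : ∀ g : G, ∑' n : ℕ, (eLpNorm (b (n + 1) g) ((2 * (n + 1) : ℕ)) μ) ^ 2 ≤
      ENNReal.ofReal (4 * β * Real.exp α * d 1 g ^ 2) := by
    intro g
    have hD : 0 ≤ d 1 g := hdnn 1 g
    have hterm : ∀ n : ℕ, (eLpNorm (b (n + 1) g) ((2 * (n + 1) : ℕ)) μ) ^ 2 ≤
        ENNReal.ofReal (2 * β * Real.exp α * d 1 g ^ 2) *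
          ENNReal.ofReal ((1/((n:ℝ)+1))^2) := by
      intro n
      set m : ℕ := n + 1 with hm
      have hmR : (0:ℝ) < (m:ℝ) := by positivity
      have hmR' : ((m:ℕ):ℝ) ≠ 0 := ne_of_gt hmR
      have hp0 : ((2*m : ℕ) : ℝ≥0∞) ≠ 0 := by
        simp [hm]
      have hptop : ((2*m : ℕ) : ℝ≥0∞) ≠ ⊤ := ENNReal.natCast_ne_top _
      rw [eLpNorm_eq_lintegral_rpow_enorm_toReal hp0 hptop]
      have htr : (((2*m : ℕ) : ℝ≥0∞)).toReal = ((2*m : ℕ) : ℝ) := by simp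
      rw [htr]
      have hint : ∫⁻ h, ‖b m g h‖ₑ ^ ((2*m : ℕ) : ℝ) ∂μ
          = ∫⁻ h, (ENNReal.ofReal |b m g h|) ^ (2 * m) ∂μ := by
        congr 1
        ext h
        rw [← ofReal_norm, Real.norm_eq_abs, ENNReal.rpow_natCast]
      rw [hint]
      set A : ℝ := (d 1 g / m) ^ (2 * m) * (2 * β * Real.exp (α * m)) with hA
      have hA0 : 0 ≤ A := by positivity
      set B : ℝ := (d 1 g / m) ^ 2 * (2 * β * Real.exp α) with hB
      have hB0 : 0 ≤ B := by positivity
      have hABm : A ≤ B ^ m := by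
        have hexp : Real.exp α ^ m = Real.exp (α * m) := by
          rw [← Real.exp_nat_mul, mul_comm]
        have hBm : B ^ m = (d 1 g / m) ^ (2 * m) * ((2 * β) ^ m * Real.exp (α * m)) := by
          rw [hB, mul_pow, ← pow_mul, mul_pow, hexp]
        rw [hBm, hA]
        apply mul_le_mul_of_nonneg_left _ (by positivity)
        apply mul_le_mul_of_nonneg_right _ (Real.exp_nonneg _)
        exact le_self_pow₀ (by linarith) (by omega)
      calc ((∫⁻ h, (ENNReal.ofReal |b m g h|) ^ (2 * m) ∂μ) ^ (1/((2*m : ℕ) : ℝ))) ^ 2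
          ≤ ((ENNReal.ofReal A) ^ (1/((2*m : ℕ) : ℝ))) ^ 2 :=
            pow_le_pow_left' (ENNReal.rpow_le_rpow (key g m (by omega)) (by positivity)) 2
        _ = (ENNReal.ofReal A) ^ ((1:ℝ)/(m:ℝ)) := by
            rw [← ENNReal.rpow_natCast ((ENNReal.ofReal A) ^ (1/((2*m : ℕ) : ℝ))) 2,
              ← ENNReal.rpow_mul]
            congr 1
            push_cast
            field_simp
        _ = ENNReal.ofReal (A ^ ((1:ℝ)/(m:ℝ))) :=
            ENNReal.ofReal_rpow_of_nonneg hA0 (by positivity)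
        _ ≤ ENNReal.ofReal B := by
            apply ENNReal.ofReal_le_ofReal
            calc A ^ ((1:ℝ)/(m:ℝ)) ≤ (B ^ m) ^ ((1:ℝ)/(m:ℝ)) :=
                Real.rpow_le_rpow hA0 hABm (by positivity)
              _ = B := by
                rw [← Real.rpow_natCast B m, ← Real.rpow_mul hB0, mul_one_div,
                  div_self hmR', Real.rpow_one]
        _ = ENNReal.ofReal (2 * β * Real.exp α * d 1 g ^ 2) *
              ENNReal.ofReal ((1/((n:ℝ)+1))^2) := by
            rw [← ENNReal.ofReal_mul (by positivity)]
            congr 1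
            rw [hB, hm]
            push_cast
            ring
    calc ∑' n : ℕ, (eLpNorm (b (n + 1) g) ((2 * (n + 1) : ℕ)) μ) ^ 2
        ≤ ∑' n : ℕ, ENNReal.ofReal (2 * β * Real.exp α * d 1 g ^ 2) *
            ENNReal.ofReal ((1/((n:ℝ)+1))^2) := ENNReal.tsum_le_tsum hterm
      _ = ENNReal.ofReal (2 * β * Real.exp α * d 1 g ^ 2) *
            ∑' n : ℕ, ENNReal.ofReal ((1/((n:ℝ)+1))^2) := ENNReal.tsum_mul_left
      _ ≤ ENNReal.ofReal (2 * β * Real.exp α * d 1 g ^ 2) * 2 :=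
            mul_le_mul_right aux_tsum_ofReal_inv_sq_le _
      _ = ENNReal.ofReal (4 * β * Real.exp α * d 1 g ^ 2) := by
            rw [← ENNReal.ofReal_ofNat 2,
              ← ENNReal.ofReal_mul (by positivity : (0:ℝ) ≤ 2 * β * Real.exp α * d 1 g ^ 2)]
            congr 1
            ring
  refine ⟨key, part2, ?_⟩
  -- part 3
  intro g
  have hD : 0 ≤ d 1 g := hdnn 1 g
  refine le_trans (ENNReal.rpow_le_rpow (part2 g) (by norm_num)) ?_
  rw [ENNReal.ofReal_rpow_of_nonneg (by positivity) (by norm_num)]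
  apply ENNReal.ofReal_le_ofReal
  have hy : 0 ≤ 2 * Real.sqrt β * Real.exp (α / 2) * d 1 g := by positivity
  have hsq : (2 * Real.sqrt β * Real.exp (α / 2) * d 1 g) ^ 2
      = 4 * β * Real.exp α * d 1 g ^ 2 := by
    have h1 : Real.sqrt β ^ 2 = β := Real.sq_sqrt (by linarith)
    have h2 : Real.exp (α / 2) ^ 2 = Real.exp α := by
      rw [sq, ← Real.exp_add, add_halves]
    rw [show (2 * Real.sqrt β * Real.exp (α / 2) * d 1 g) ^ 2
        = 4 * (Real.sqrt β ^ 2) * (Real.exp (α / 2) ^ 2) * d 1 g ^ 2 from by ring, h1, h2]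
  rw [← hsq, ← Real.rpow_natCast (2 * Real.sqrt β * Real.exp (α / 2) * d 1 g) 2,
    ← Real.rpow_mul hy]
  norm_num
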